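/- Let λ1, λ2, μ1, μ2 > 0 with μ1 > λ1(1 + λ2/μ2). Define a1 = 1 + (λ1+λ2)/μ1 − μ2λ2/(μ1(μ2+λ1)), a3 = λ1/μ1, a5 = λ1/(μ2+λ1). Then both roots l1 ≤ l2 of p(l) = l² − l(a1+a5−1) + a3·a5 are real and satisfy 0 < l1 < l2 < 1. -/

import Mathlib

theorem stmt_3 (l1 l2 m1 m2 : ℝ) (hl1 : 0 < l1) (hl2 : 0 < l2)
    (hm1 : 0 < m1) (hm2 : 0 < m2) (hstab : m1 > l1 * (1 + l2 / m2))
    (a1 : ℝ) (ha1 : a1 = 1 + (l1 + l2) / m1 - m2 * l2 / (m1 * (m2 + l1)))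
    (a3 : ℝ) (ha3 : a3 = l1 / m1)
    (a5 : ℝ) (ha5 : a5 = l1 / (m2 + l1))
    (r1 r2 : ℝ)
    (hr1 : r1 = ((a1 + a5 - 1) - Real.sqrt ((a1 + a5 - 1) ^ 2 - 4 * (a3 * a5))) / 2)
    (hr2 : r2 = ((a1 + a5 - 1) + Real.sqrt ((a1 + a5 - 1) ^ 2 - 4 * (a3 * a5))) / 2) :
    (r1 ^ 2 - r1 * (a1 + a5 - 1) + a3 * a5 = 0) ∧
    (r2 ^ 2 - r2 * (a1 + a5 - 1) + a3 * a5 = 0) ∧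
    0 < r1 ∧ r1 < r2 ∧ r2 < 1 := by
  have hs : (0:ℝ) < m2 + l1 := by linarith
  set b := a1 + a5 - 1 with hb
  set c := a3 * a5 with hc
  clear_value b c
  have hbval : b = l1 * (m2 + l1 + l2 + m1) / (m1 * (m2 + l1)) := by
    rw [hb, ha1, ha5]; field_simp; ring
  have hcval : c = l1 ^ 2 / (m1 * (m2 + l1)) := by
    rw [hc, ha3, ha5]; field_simp
  have hbpos : 0 < b := by rw [hbval]; positivity
  have hcpos : 0 < c := by rw [hcval]; positivity
  have hDval : b ^ 2 - 4 * c =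
      l1 ^ 2 * ((m2 + l1 - m1) ^ 2 + l2 ^ 2 + 2 * l2 * (m2 + l1 + m1)) /
        (m1 * (m2 + l1)) ^ 2 := by
    rw [hbval, hcval]; field_simp; ring
  have hD : 0 < b ^ 2 - 4 * c := by
    rw [hDval]
    apply div_pos
    · have h2 : 0 < (m2 + l1 - m1) ^ 2 + l2 ^ 2 + 2 * l2 * (m2 + l1 + m1) := by
        nlinarith [sq_nonneg (m2 + l1 - m1), mul_pos hl2 hl2, mul_pos hl2 hs, mul_pos hl2 hm1]
      exact mul_pos (pow_pos hl1 2) h2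
    · positivity
  have hstab' : l1 * m2 + l1 * l2 < m1 * m2 := by
    have e : l1 * (1 + l2 / m2) * m2 = l1 * m2 + l1 * l2 := by field_simp
    nlinarith [mul_lt_mul_of_pos_right hstab hm2]
  have h1pos : 0 < 1 - b + c := by
    have e : 1 - b + c = (m1 * m2 - l1 * m2 - l1 * l2) / (m1 * (m2 + l1)) := by
      rw [hbval, hcval]; field_simp; ring
    rw [e]
    apply div_pos (by linarith) (by positivity)
  have hclt1 : c < 1 := by
    rw [hcval]
    clear hr1 hr2 ha1 ha3 ha5 hb hc hbval hcval hDval hD h1pos hstab'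
    rw [div_lt_one (by positivity)]
    have hml : l1 < m1 := by nlinarith [mul_pos hl1 (div_pos hl2 hm2)]
    nlinarith [mul_pos hm1 hm2, mul_lt_mul_of_pos_right hml hl1]
  set sq := Real.sqrt (b ^ 2 - 4 * c) with hsqdef
  clear_value sq
  have hsq : sq ^ 2 = b ^ 2 - 4 * c := by rw [hsqdef]; exact Real.sq_sqrt hD.le
  have hsqpos : 0 < sq := by rw [hsqdef]; exact Real.sqrt_pos.mpr hD
  have hsqb : sq < b := by
    clear hr1 hr2 ha1 ha3 ha5 hb hc hbval hcval hDval hstab' h1pos hclt1 hstab hsqdef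
    nlinarith
  have hsq2b : sq < 2 - b := by
    clear hr1 hr2 ha1 ha3 ha5 hb hc hbval hcval hDval hstab' hstab hsqdef hD hsqb
    nlinarith
  refine ⟨?_, ?_, ?_, ?_, ?_⟩
  · rw [hr1]; linear_combination hsq / 4
  · rw [hr2]; linear_combination hsq / 4
  · rw [hr1]; linarith
  · rw [hr1, hr2]; linarith
  · rw [hr2]; linarith
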